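/- O(1/k) iteration complexity of iBPG at the averaged iterate: under the standing assumptions, if Σ_k η_k(‖x̃^{k+1}‖+1) < ∞, Σ_k μ_k < ∞, Σ_k ν_k < ∞, and the problem inf{F(x) : x ∈ Q} has an optimal solution x* ∈ dom φ, then there exists a constant C ≥ 0 such that F( (1/k)Σ_{i=0}^{k-1} x̃^{i+1} ) − F* ≤ C/k for all k ≥ 1. -/

import Mathlib

open Filter Topology RealInnerProductSpace

/-- The Bregman distance associated with the kernel `φ` whose gradient map is `gφ`. -/
noncomputable def breg {E : Type*} [NormedAddCommGroup E] [InnerProductSpace ℝ E]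
    (φ : E → ℝ) (gφ : E → E) (x y : E) : ℝ :=
  φ x - φ y - ⟪gφ y, x - y⟫

/-- The ν-subdifferential of `P` (a proper function with effective domain `domP`) at `x`. -/
def nuSubdiff {E : Type*} [NormedAddCommGroup E] [InnerProductSpace ℝ E]
    (P : E → ℝ) (domP : Set E) (ν : ℝ) (x : E) : Set E :=
  {d : E | ∀ u ∈ domP, P x + ⟪d, u - x⟫ - ν ≤ P u}

open Classical in
/-- Extension of a real-valued function with effective domain `dom` to an `EReal`-valued
function taking the value `⊤` outside `dom`. -/
noncomputable def extFun {E : Type*} (g : E → ℝ) (dom : Set E) : E → EReal :=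
  fun x => if x ∈ dom then (g x : EReal) else ⊤

/-- `φ` (with effective domain `domφ` and gradient map `gφ`) is essentially smooth. -/
def EssentiallySmooth {E : Type*} [NormedAddCommGroup E] [InnerProductSpace ℝ E]
    [FiniteDimensional ℝ E] (φ : E → ℝ) (domφ : Set E) (gφ : E → E) : Prop :=
  (interior domφ).Nonempty ∧
  (∀ x ∈ interior domφ, HasGradientAt φ (gφ x) x) ∧
  ∀ (u : ℕ → E) (u₀ : E), (∀ n, u n ∈ interior domφ) →
    Tendsto u atTop (𝓝 u₀) → u₀ ∈ frontier (interior domφ) →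
    Tendsto (fun n => ‖gφ (u n)‖) atTop atTop

/-- The standing assumptions (Assumption A) for the problem `inf {P x + f x : x ∈ Q}`. -/
structure Standing {E : Type*} [NormedAddCommGroup E] [InnerProductSpace ℝ E]
    [FiniteDimensional ℝ E] (Q domφ domP domf X : Set E)
    (φ P f : E → ℝ) (gφ gf : E → E) (L : ℝ) : Prop where
  hQclosed : IsClosed Q
  hQconv : Convex ℝ Q
  hQint : (interior Q).Nonempty
  hφconv : ConvexOn ℝ domφ φ
  hφstrict : StrictConvexOn ℝ (interior domφ) φ
  hφsmooth : EssentiallySmooth φ domφ gφ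
  hφQ : closure domφ = Q
  hPne : domP.Nonempty
  hPconv : ConvexOn ℝ domP P
  hPclosed : LowerSemicontinuous (extFun P domP)
  hPQ : (domP ∩ interior Q).Nonempty
  hfconv : ConvexOn ℝ domf f
  hfclosed : LowerSemicontinuous (extFun f domf)
  hfdom : domφ ⊆ domf
  hfgrad : ∀ x ∈ interior domφ, HasGradientAt f (gf x) x
  hXclosed : IsClosed X
  hXconv : Convex ℝ X
  hXsup : domP ∩ domφ ⊆ X
  hLnn : 0 ≤ L
  hrel : ∀ u ∈ interior domφ ∩ X, ∀ v ∈ domφ ∩ X,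
    f v ≤ f u + ⟪gf u, v - u⟫ + L * breg φ gφ v u

/-- The iBPG iterates with inexactness tolerance sequences `η`, `μ`, `ν`. -/
structure IBPGIter {E : Type*} [NormedAddCommGroup E] [InnerProductSpace ℝ E]
    [FiniteDimensional ℝ E] (domφ domP X : Set E) (φ P : E → ℝ) (gφ gf : E → E) (L : ℝ)
    (η μ ν : ℕ → ℝ) (x xt : ℕ → E) : Prop where
  hη : ∀ k, 0 ≤ η k
  hμ : ∀ k, 0 ≤ μ k
  hν : ∀ k, 0 ≤ ν k
  hx : ∀ k, x k ∈ X ∩ interior domφ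
  hxt : ∀ k, xt k ∈ domP ∩ domφ
  hinex : ∀ k, ∃ d ∈ nuSubdiff P domP (ν k) (xt (k+1)),
    ‖d + gf (x k) + L • (gφ (x (k+1)) - gφ (x k))‖ ≤ η k
  hdist : ∀ k, breg φ gφ (xt (k+1)) (x (k+1)) ≤ μ k

/-- Gradient inequality for a convex function at a point where it has a gradient. -/
lemma grad_ineq {E : Type*} [NormedAddCommGroup E] [InnerProductSpace ℝ E] [CompleteSpace E]
    {s : Set E} {f : E → ℝ} (hf : ConvexOn ℝ s f) {x v : E} (hx : x ∈ s) (hv : v ∈ s)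
    {g : E} (hg : HasGradientAt f g x) : f x + ⟪g, v - x⟫ ≤ f v := by
  set w := v - x with hw
  have hc : ∀ t : ℝ, HasDerivAt (fun t : ℝ => x + t • w) w t := by
    intro t
    simpa using ((hasDerivAt_id t).smul_const w).const_add x
  have hcomp : HasDerivAt (fun t : ℝ => f (x + t • w)) ⟪g, w⟫ 0 := by
    have hx0 : x + (0:ℝ) • w = x := by simp
    have hfd : HasFDerivAt f ((InnerProductSpace.toDual ℝ E) g) (x + (0:ℝ) • w) := by
      rw [hx0]; exact hg.hasFDerivAt
    have := hfd.comp_hasDerivAt 0 (hc 0)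
    exact this
  have hslope : Tendsto (slope (fun t : ℝ => f (x + t • w)) 0) (𝓝[>] 0) (𝓝 ⟪g, w⟫) :=
    (hasDerivAt_iff_tendsto_slope.1 hcomp).mono_left
      (nhdsWithin_mono 0 (fun t ht => ne_of_gt ht))
  have hle : ⟪g, w⟫ ≤ f v - f x := by
    refine le_of_tendsto hslope ?_
    filter_upwards [Ioc_mem_nhdsGT_of_mem (by norm_num : (0:ℝ) ∈ Set.Ico 0 1)] with t ht
    have ht0 : 0 < t := ht.1
    have ht1 : t ≤ 1 := ht.2
    have hconv : f (x + t • w) ≤ (1 - t) * f x + t * f v := by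
      have h := hf.2 hx hv (by linarith : (0:ℝ) ≤ 1 - t) (le_of_lt ht0) (by ring)
      have heq : (1 - t) • x + t • v = x + t • w := by
        simp [hw, smul_sub, sub_smul]; abel
      rw [heq] at h
      simpa using h
    have : slope (fun t : ℝ => f (x + t • w)) 0 t = (f (x + t • w) - f x) / t := by
      simp [slope, div_eq_inv_mul]
    rw [this, div_le_iff₀ ht0]
    nlinarith
  linarith

/-- **O(1/k) iteration complexity of iBPG at the averaged iterate** (Theorem 3.1(iv)). Under the
standing assumptions, if `Σ_k η_k (‖x̃^{k+1}‖+1) < ∞`, `Σ_k μ_k < ∞`, `Σ_k ν_k < ∞`, and the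
problem has an optimal solution `x* ∈ dom φ`, then there is `C ≥ 0` with
`F((1/k) Σ_{i<k} x̃^{i+1}) − F* ≤ C/k` for all `k ≥ 1`, where `F = P + f`. -/
theorem iBPG_averaged_iteration_complexity
    {E : Type*} [NormedAddCommGroup E] [InnerProductSpace ℝ E] [FiniteDimensional ℝ E]
    (Q domφ domP domf X : Set E) (φ P f : E → ℝ) (gφ gf : E → E) (L : ℝ)
    (hstand : Standing Q domφ domP domf X φ P f gφ gf L)
    (η μ ν : ℕ → ℝ) (x xt : ℕ → E)
    (hiter : IBPGIter domφ domP X φ P gφ gf L η μ ν x xt)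
    (Fstar : ℝ) (hFstar : IsGLB ((fun u => P u + f u) '' (domP ∩ domf ∩ Q)) Fstar)
    (h1 : Summable (fun k => η k * (‖xt (k+1)‖ + 1)))
    (h2 : Summable μ) (h3 : Summable ν)
    (xstar : E) (hxstar : xstar ∈ domP ∩ domφ)
    (hopt : ∀ u ∈ domP ∩ domf ∩ Q, P xstar + f xstar ≤ P u + f u) :
    ∃ C : ℝ, 0 ≤ C ∧ ∀ k : ℕ, 1 ≤ k →
      (P ((k : ℝ)⁻¹ • ∑ i ∈ Finset.range k, xt (i+1))
        + f ((k : ℝ)⁻¹ • ∑ i ∈ Finset.range k, xt (i+1))) - Fstar ≤ C / (k : ℝ) := by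
  have hφQsub : domφ ⊆ Q := hstand.hφQ ▸ subset_closure
  have hdomf : domφ ⊆ domf := hstand.hfdom
  have hgradφ := hstand.hφsmooth.2.1
  have hxmem : xstar ∈ domP ∩ domf ∩ Q := ⟨⟨hxstar.1, hdomf hxstar.2⟩, hφQsub hxstar.2⟩
  have hFstar_eq : Fstar = P xstar + f xstar := by
    refine le_antisymm (hFstar.1 ⟨xstar, hxmem, rfl⟩) (hFstar.2 ?_)
    rintro y ⟨u, hu, rfl⟩
    exact hopt u hu
  set D : ℕ → ℝ := fun k => breg φ gφ xstar (x k) with hD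
  have hDnn : ∀ k, 0 ≤ D k := by
    intro k
    have := grad_ineq hstand.hφconv (interior_subset (hiter.hx k).2) hxstar.2
      (hgradφ _ (hiter.hx k).2)
    simp only [hD, breg]
    linarith
  -- key per-iteration inequality
  have key : ∀ k, P (xt (k+1)) + f (xt (k+1)) - Fstar ≤
      L * D k - L * D (k+1) + L * μ k + ν k + (1 + ‖xstar‖) * (η k * (‖xt (k+1)‖ + 1)) := by
    intro k
    obtain ⟨d, hd, hΔ⟩ := hiter.hinex k
    have hxtk := hiter.hxt (k+1)
    have hxk := hiter.hx k
    have hP : P (xt (k+1)) + ⟪d, xstar - xt (k+1)⟫ - ν k ≤ P xstar := hd xstar hxstar.1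
    have hf1 : f (x k) + ⟪gf (x k), xstar - x k⟫ ≤ f xstar :=
      grad_ineq hstand.hfconv (hdomf (interior_subset hxk.2)) (hdomf hxstar.2)
        (hstand.hfgrad _ hxk.2)
    have hf2 : f (xt (k+1)) ≤ f (x k) + ⟪gf (x k), xt (k+1) - x k⟫
        + L * breg φ gφ (xt (k+1)) (x k) :=
      hstand.hrel (x k) ⟨hxk.2, hxk.1⟩ (xt (k+1)) ⟨hxtk.2, hstand.hXsup hxtk⟩
    have hΔb : ⟪d + gf (x k) + L • (gφ (x (k+1)) - gφ (x k)), xt (k+1) - xstar⟫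
        ≤ η k * (‖xt (k+1)‖ + ‖xstar‖) := by
      calc ⟪d + gf (x k) + L • (gφ (x (k+1)) - gφ (x k)), xt (k+1) - xstar⟫
          ≤ ‖d + gf (x k) + L • (gφ (x (k+1)) - gφ (x k))‖ * ‖xt (k+1) - xstar‖ :=
            real_inner_le_norm _ _
        _ ≤ η k * (‖xt (k+1)‖ + ‖xstar‖) := by
            apply mul_le_mul hΔ (norm_sub_le _ _) (norm_nonneg _)
            exact hiter.hη k
    have hexp : ⟪d + gf (x k) + L • (gφ (x (k+1)) - gφ (x k)), xt (k+1) - xstar⟫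
        = - ⟪d, xstar - xt (k+1)⟫ - ⟪gf (x k), xstar - xt (k+1)⟫
          - L * ⟪gφ (x (k+1)) - gφ (x k), xstar - xt (k+1)⟫ := by
      simp only [inner_add_left, real_inner_smul_left, inner_sub_left, inner_sub_right]
      ring
    have hsplit : ⟪gf (x k), xstar - x k⟫
        = ⟪gf (x k), xstar - xt (k+1)⟫ + ⟪gf (x k), xt (k+1) - x k⟫ := by
      simp only [inner_sub_right]; ring
    have hid : breg φ gφ (xt (k+1)) (x k) + ⟪gφ (x (k+1)) - gφ (x k), xstar - xt (k+1)⟫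
        = D k - D (k+1) + breg φ gφ (xt (k+1)) (x (k+1)) := by
      simp only [hD, breg, inner_sub_left, inner_sub_right]
      ring
    have hidL : L * breg φ gφ (xt (k+1)) (x k)
        + L * ⟪gφ (x (k+1)) - gφ (x k), xstar - xt (k+1)⟫
        = L * D k - L * D (k+1) + L * breg φ gφ (xt (k+1)) (x (k+1)) := by
      linear_combination L * hid
    have hbdL : L * breg φ gφ (xt (k+1)) (x (k+1)) ≤ L * μ k :=
      mul_le_mul_of_nonneg_left (hiter.hdist k) hstand.hLnn
    have hηb : η k * (‖xt (k+1)‖ + ‖xstar‖) ≤ (1 + ‖xstar‖) * (η k * (‖xt (k+1)‖ + 1)) := by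
      nlinarith [hiter.hη k, norm_nonneg (xt (k+1)), norm_nonneg xstar,
        mul_nonneg (mul_nonneg (hiter.hη k) (norm_nonneg xstar)) (norm_nonneg (xt (k+1)))]
    rw [hexp] at hΔb
    rw [hFstar_eq]
    linarith
  -- the constant
  set C : ℝ := L * D 0 + L * (∑' i, μ i) + (∑' i, ν i)
      + (1 + ‖xstar‖) * (∑' i, η i * (‖xt (i+1)‖ + 1)) with hC
  have hμt : 0 ≤ ∑' i, μ i := tsum_nonneg hiter.hμ
  have hνt : 0 ≤ ∑' i, ν i := tsum_nonneg hiter.hν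
  have hηnn : ∀ i, 0 ≤ η i * (‖xt (i+1)‖ + 1) := fun i =>
    mul_nonneg (hiter.hη i) (by positivity)
  have hηt : 0 ≤ ∑' i, η i * (‖xt (i+1)‖ + 1) := tsum_nonneg hηnn
  have hCnn : 0 ≤ C := by
    have h0 : (0:ℝ) ≤ 1 + ‖xstar‖ := by positivity
    have := mul_nonneg hstand.hLnn (hDnn 0)
    have := mul_nonneg hstand.hLnn hμt
    have := mul_nonneg h0 hηt
    simp only [hC]
    linarith
  -- partial-sum bound
  have hsum : ∀ k : ℕ, ∑ i ∈ Finset.range k, (P (xt (i+1)) + f (xt (i+1)) - Fstar) ≤ C := by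
    intro k
    have h1' : ∑ i ∈ Finset.range k,
        (L * D i - L * D (i+1) + L * μ i + ν i + (1 + ‖xstar‖) * (η i * (‖xt (i+1)‖ + 1)))
        = (L * D 0 - L * D k) + L * (∑ i ∈ Finset.range k, μ i)
          + (∑ i ∈ Finset.range k, ν i)
          + (1 + ‖xstar‖) * (∑ i ∈ Finset.range k, η i * (‖xt (i+1)‖ + 1)) := by
      rw [Finset.sum_add_distrib, Finset.sum_add_distrib, Finset.sum_add_distrib,
        Finset.sum_range_sub' (fun i => L * D i) k, ← Finset.mul_sum, ← Finset.mul_sum]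
    have h2' : ∑ i ∈ Finset.range k, μ i ≤ ∑' i, μ i :=
      Summable.sum_le_tsum _ (fun i _ => hiter.hμ i) h2
    have h3' : ∑ i ∈ Finset.range k, ν i ≤ ∑' i, ν i :=
      Summable.sum_le_tsum _ (fun i _ => hiter.hν i) h3
    have h4' : ∑ i ∈ Finset.range k, η i * (‖xt (i+1)‖ + 1)
        ≤ ∑' i, η i * (‖xt (i+1)‖ + 1) := Summable.sum_le_tsum _ (fun i _ => hηnn i) h1
    have h5' := Finset.sum_le_sum (fun i (_ : i ∈ Finset.range k) => key i)
    rw [h1'] at h5'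
    have hLD : 0 ≤ L * D k := mul_nonneg hstand.hLnn (hDnn k)
    have hLμ : L * (∑ i ∈ Finset.range k, μ i) ≤ L * (∑' i, μ i) :=
      mul_le_mul_of_nonneg_left h2' hstand.hLnn
    have hη' : (1 + ‖xstar‖) * (∑ i ∈ Finset.range k, η i * (‖xt (i+1)‖ + 1))
        ≤ (1 + ‖xstar‖) * (∑' i, η i * (‖xt (i+1)‖ + 1)) :=
      mul_le_mul_of_nonneg_left h4' (by positivity)
    simp only [hC]
    linarith
  refine ⟨C, hCnn, ?_⟩
  intro k hk
  have hk0 : (0:ℝ) < k := by exact_mod_cast Nat.lt_of_lt_of_le Nat.zero_lt_one hk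
  have hkne : (k:ℝ) ≠ 0 := ne_of_gt hk0
  have hw : ∑ _i ∈ Finset.range k, (k:ℝ)⁻¹ = 1 := by
    rw [Finset.sum_const, Finset.card_range, nsmul_eq_mul, mul_inv_cancel₀ hkne]
  have hpt : (k : ℝ)⁻¹ • ∑ i ∈ Finset.range k, xt (i+1)
      = ∑ i ∈ Finset.range k, (k:ℝ)⁻¹ • xt (i+1) := Finset.smul_sum
  have hJP : P (∑ i ∈ Finset.range k, (k:ℝ)⁻¹ • xt (i+1))
      ≤ ∑ i ∈ Finset.range k, (k:ℝ)⁻¹ * P (xt (i+1)) := by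
    have := hstand.hPconv.map_sum_le (fun i _ => by positivity) hw
      (fun i _ => (hiter.hxt (i+1)).1)
    simpa [smul_eq_mul] using this
  have hJf : f (∑ i ∈ Finset.range k, (k:ℝ)⁻¹ • xt (i+1))
      ≤ ∑ i ∈ Finset.range k, (k:ℝ)⁻¹ * f (xt (i+1)) := by
    have := hstand.hfconv.map_sum_le (fun i _ => by positivity) hw
      (fun i _ => hdomf (hiter.hxt (i+1)).2)
    simpa [smul_eq_mul] using this
  have hmul : ∑ i ∈ Finset.range k, (k:ℝ)⁻¹ * P (xt (i+1))
      + ∑ i ∈ Finset.range k, (k:ℝ)⁻¹ * f (xt (i+1))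
      = (k:ℝ)⁻¹ * ∑ i ∈ Finset.range k, (P (xt (i+1)) + f (xt (i+1))) := by
    rw [Finset.mul_sum, ← Finset.sum_add_distrib]
    apply Finset.sum_congr rfl
    intros; ring
  have hsplitsum : ∑ i ∈ Finset.range k, (P (xt (i+1)) + f (xt (i+1)) - Fstar)
      = ∑ i ∈ Finset.range k, (P (xt (i+1)) + f (xt (i+1))) - k * Fstar := by
    rw [Finset.sum_sub_distrib, Finset.sum_const, Finset.card_range, nsmul_eq_mul]
  have hS := hsum k
  rw [hsplitsum] at hS
  have h5 : (k:ℝ)⁻¹ * (∑ i ∈ Finset.range k, (P (xt (i+1)) + f (xt (i+1))))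
      ≤ (k:ℝ)⁻¹ * (C + k * Fstar) :=
    mul_le_mul_of_nonneg_left (by linarith) (by positivity)
  have h6 : (k:ℝ)⁻¹ * (C + k * Fstar) = C / k + Fstar := by
    field_simp
  rw [hpt]
  linarith
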